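/- Let n ≥ 1, p_0 > p_1 > ... > p_n > 0 be real numbers and α_0, ..., α_n nonzero reals. Then the function f(t) = Σ_{j=0}^n α_j p_j^t has at most as many real zeros as there are sign changes in the sequence α_0, α_1, ..., α_n. -/

import Mathlib

open Real Finset

private lemma rolle_finset_card (f f' : ℝ → ℝ) (hd : ∀ t, HasDerivAt f (f' t) t)
    (Z : Finset ℝ) (hZ : ∀ t, f' t = 0 → t ∈ Z)
    (T : Finset ℝ) (hT : ∀ t ∈ T, f t = 0) : T.card ≤ Z.card + 1 := by
  rcases Nat.eq_zero_or_pos T.card with h0 | hpos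
  · omega
  obtain ⟨m, hm⟩ : ∃ m, T.card = m + 1 := ⟨T.card - 1, by omega⟩
  have hcont : Continuous f := by
    rw [continuous_iff_continuousAt]; exact fun t => (hd t).continuousAt
  let e := T.orderIsoOfFin hm
  have hroll : ∀ i : Fin m, ∃ c ∈ Set.Ioo ((e i.castSucc : ℝ)) ((e i.succ : ℝ)), f' c = 0 := by
    intro i
    have hlt : ((e i.castSucc : ℝ)) < ((e i.succ : ℝ)) := by
      exact_mod_cast e.strictMono (Fin.castSucc_lt_succ : i.castSucc < i.succ)
    refine exists_hasDerivAt_eq_zero hlt (hcont.continuousOn) ?_ (fun x _ => hd x)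
    rw [hT _ (e i.castSucc).2, hT _ (e i.succ).2]
  choose c hc hc0 using hroll
  have hmono : StrictMono c := by
    intro i j hij
    have h1 : (c i) < ((e i.succ : ℝ)) := (hc i).2
    have h2 : ((e j.castSucc : ℝ)) < c j := (hc j).1
    have h3 : ((e i.succ : ℝ)) ≤ ((e j.castSucc : ℝ)) := by
      have : i.succ ≤ j.castSucc := by
        simp only [Fin.le_def, Fin.val_succ, Fin.coe_castSucc]
        exact Fin.lt_def.mp hij
      exact_mod_cast (e.monotone this)
    linarith
  have himg : (Finset.univ.image c) ⊆ Z := by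
    intro x hx
    simp only [Finset.mem_image] at hx
    obtain ⟨i, _, rfl⟩ := hx
    exact hZ _ (hc0 i)
  have hcard : (Finset.univ.image c).card = m := by
    rw [Finset.card_image_of_injective _ hmono.injective, Finset.card_univ, Fintype.card_fin]
  have := Finset.card_le_card himg
  omega

private lemma rolle_zeros (f f' : ℝ → ℝ) (hd : ∀ t, HasDerivAt f (f' t) t)
    (hfin : {t | f' t = 0}.Finite) :
    {t | f t = 0}.Finite ∧ {t | f t = 0}.ncard ≤ {t | f' t = 0}.ncard + 1 := by
  have hZ : ∀ t, f' t = 0 → t ∈ hfin.toFinset := by simp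
  have key := rolle_finset_card f f' hd hfin.toFinset hZ
  have hfinf : {t | f t = 0}.Finite := by
    by_contra h
    have hinf : ({t | f t = 0} : Set ℝ).Infinite := h
    obtain ⟨T, hTsub, hTcard⟩ := hinf.exists_subset_card_eq (hfin.toFinset.card + 2)
    have := key T (fun t ht => hTsub ht)
    omega
  refine ⟨hfinf, ?_⟩
  rw [Set.ncard_eq_toFinset_card _ hfinf, Set.ncard_eq_toFinset_card _ hfin]
  exact key _ (by simp)

private lemma exp_sum_zeros (S : ℕ) : ∀ (n : ℕ) (b α : Fin (n + 1) → ℝ),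
    StrictAnti b → (∀ j, α j ≠ 0) →
    (Finset.univ.filter fun j : Fin n => α j.castSucc * α j.succ < 0).card = S →
    {t : ℝ | ∑ j, α j * Real.exp (b j * t) = 0}.Finite ∧
      {t : ℝ | ∑ j, α j * Real.exp (b j * t) = 0}.ncard ≤ S := by
  induction S with
  | zero =>
    intro n b α hb hα hS
    have hempty : ∀ j : Fin n, ¬ (α j.castSucc * α j.succ < 0) := by
      intro j hj
      have : j ∈ Finset.univ.filter fun j : Fin n => α j.castSucc * α j.succ < 0 := by
        simp [hj]
      rw [Finset.card_eq_zero] at hS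
      simp [hS] at this
    have hsame : ∀ j : Fin n, 0 < α j.castSucc * α j.succ := fun j =>
      lt_of_le_of_ne (not_lt.mp (hempty j)) (Ne.symm (mul_ne_zero (hα _) (hα _)))
    have hall : ∀ j : Fin (n + 1), 0 < α 0 * α j := by
      intro j
      induction j using Fin.induction with
      | zero => exact mul_self_pos.mpr (hα 0)
      | succ i ih => nlinarith [mul_pos ih (hsame i), mul_self_pos.mpr (hα i.castSucc)]
    have hne : ∀ t : ℝ, (∑ j, α j * Real.exp (b j * t)) ≠ 0 := by
      intro t hsum
      have hpos : 0 < ∑ j, α 0 * (α j * Real.exp (b j * t)) := by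
        apply Finset.sum_pos
        · intro j _
          have := Real.exp_pos (b j * t)
          nlinarith [hall j]
        · exact Finset.univ_nonempty
      rw [← Finset.mul_sum, hsum, mul_zero] at hpos
      exact lt_irrefl 0 hpos
    have : {t : ℝ | ∑ j, α j * Real.exp (b j * t) = 0} = ∅ := by
      ext t; simp [hne t]
    rw [this]; simp
  | succ S IH =>
    intro n b α hb hα hS
    obtain ⟨k, hk⟩ : ∃ k, k ∈ Finset.univ.filter
        fun j : Fin n => α j.castSucc * α j.succ < 0 := by
      apply Finset.card_pos.mp; omega
    have hkneg : α k.castSucc * α k.succ < 0 := (Finset.mem_filter.mp hk).2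
    set c : ℝ := (b k.castSucc + b k.succ) / 2 with hc
    have hblt : b k.succ < b k.castSucc := hb (Fin.castSucc_lt_succ : k.castSucc < k.succ)
    have hc1 : b k.succ < c := by rw [hc]; linarith
    have hc2 : c < b k.castSucc := by rw [hc]; linarith
    have hpos : ∀ j : Fin (n + 1), j.val ≤ k.val → 0 < b j - c := by
      intro j hj
      have : b k.castSucc ≤ b j := hb.antitone (by rw [Fin.le_def]; simpa using hj)
      linarith
    have hneg : ∀ j : Fin (n + 1), k.val < j.val → b j - c < 0 := by
      intro j hj
      have : b j ≤ b k.succ := hb.antitone (by rw [Fin.le_def]; simp; omega)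
      linarith
    set β : Fin (n + 1) → ℝ := fun j => α j * (b j - c) with hβ
    have hβne : ∀ j, β j ≠ 0 := by
      intro j
      rcases le_or_gt j.val k.val with h | h
      · exact mul_ne_zero (hα j) (ne_of_gt (hpos j h))
      · exact mul_ne_zero (hα j) (ne_of_lt (hneg j h))
    have hfilter : (Finset.univ.filter fun j : Fin n => β j.castSucc * β j.succ < 0) =
        (Finset.univ.filter fun j : Fin n => α j.castSucc * α j.succ < 0).erase k := by
      ext j
      simp only [Finset.mem_erase, Finset.mem_filter, Finset.mem_univ, true_and, hβ]
      have hjc : (j.castSucc : Fin (n+1)).val = j.val := rfl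
      have hjs : (j.succ : Fin (n+1)).val = j.val + 1 := rfl
      have hkey : α j.castSucc * (b j.castSucc - c) * (α j.succ * (b j.succ - c)) =
          (α j.castSucc * α j.succ) * ((b j.castSucc - c) * (b j.succ - c)) := by ring
      rw [hkey]
      rcases lt_trichotomy j.val k.val with h | h | h
      · have d1 := hpos j.castSucc (by omega)
        have d2 := hpos j.succ (by omega)
        have hd := mul_pos d1 d2
        have hjk : j ≠ k := fun e => by subst e; omega
        constructor
        · intro hlt; exact ⟨hjk, by nlinarith⟩
        · rintro ⟨-, hlt⟩; exact mul_neg_of_neg_of_pos hlt hd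
      · have hjk : j = k := Fin.ext h
        subst hjk
        have d1 := hpos j.castSucc (by omega)
        have d2 := hneg j.succ (by omega)
        have hd := mul_neg_of_pos_of_neg d1 d2
        constructor
        · intro hlt; nlinarith [mul_pos_of_neg_of_neg hkneg hd]
        · rintro ⟨hne, -⟩; exact absurd rfl hne
      · have d1 := hneg j.castSucc (by omega)
        have d2 := hneg j.succ (by omega)
        have hd := mul_pos_of_neg_of_neg d1 d2
        have hjk : j ≠ k := fun e => by subst e; omega
        constructor
        · intro hlt; exact ⟨hjk, by nlinarith⟩
        · rintro ⟨-, hlt⟩; exact mul_neg_of_neg_of_pos hlt hd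
    have hβcard : (Finset.univ.filter fun j : Fin n => β j.castSucc * β j.succ < 0).card = S := by
      rw [hfilter, Finset.card_erase_of_mem hk, hS]
      omega
    have hb' : StrictAnti (fun j : Fin (n+1) => b j - c) := fun i j hij =>
      sub_lt_sub_right (hb hij) c
    obtain ⟨hfinh, hcardh⟩ := IH n (fun j => b j - c) β hb' hβne hβcard
    -- derivative of g t = ∑ α j * exp ((b j - c) * t) is ∑ β j * exp ((b j - c) * t)
    have hderiv : ∀ t : ℝ, HasDerivAt (fun t => ∑ j, α j * Real.exp ((b j - c) * t))
        (∑ j, β j * Real.exp ((b j - c) * t)) t := by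
      intro t
      have : ∀ j ∈ Finset.univ, HasDerivAt (fun t => α j * Real.exp ((b j - c) * t))
          (β j * Real.exp ((b j - c) * t)) t := by
        intro j _
        have h1 : HasDerivAt (fun t : ℝ => (b j - c) * t) (b j - c) t := by
          simpa using (hasDerivAt_id t).const_mul (b j - c)
        have h2 := (h1.exp).const_mul (α j)
        have hβj : β j * Real.exp ((b j - c) * t) = α j * (Real.exp ((b j - c) * t) * (b j - c)) := by
          rw [hβ]; ring
        rw [hβj]; exact h2
      exact HasDerivAt.fun_sum this
    obtain ⟨hfing, hcardg⟩ := rolle_zeros _ _ hderiv hfinh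
    have hseteq : {t : ℝ | ∑ j, α j * Real.exp (b j * t) = 0} =
        {t : ℝ | ∑ j, α j * Real.exp ((b j - c) * t) = 0} := by
      ext t
      simp only [Set.mem_setOf_eq]
      have heq : (∑ j, α j * Real.exp ((b j - c) * t)) =
          (∑ j, α j * Real.exp (b j * t)) * Real.exp (-(c * t)) := by
        rw [Finset.sum_mul]
        refine Finset.sum_congr rfl fun j _ => ?_
        rw [mul_assoc, ← Real.exp_add]
        congr 2
        ring
      rw [heq]
      constructor
      · intro h; rw [h, zero_mul]
      · intro h
        rcases mul_eq_zero.mp h with h | h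
        · exact h
        · exact absurd h (Real.exp_ne_zero _)
    rw [hseteq]
    exact ⟨hfing, by omega⟩

theorem stmt_0 (n : ℕ) (hn : 1 ≤ n) (p : Fin (n + 1) → ℝ) (α : Fin (n + 1) → ℝ)
    (hp : StrictAnti p) (hppos : ∀ j, 0 < p j) (hα : ∀ j, α j ≠ 0)
    (f : ℝ → ℝ) (hf : ∀ t, f t = ∑ j, α j * (p j) ^ t) :
    {t : ℝ | f t = 0}.Finite ∧
      {t : ℝ | f t = 0}.ncard ≤
        (Finset.univ.filter fun j : Fin n => α j.castSucc * α j.succ < 0).card := by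
  have hb : StrictAnti (fun j : Fin (n+1) => Real.log (p j)) := fun i j hij =>
    Real.log_lt_log (hppos j) (hp hij)
  obtain ⟨hfin, hcard⟩ := exp_sum_zeros
    ((Finset.univ.filter fun j : Fin n => α j.castSucc * α j.succ < 0).card)
    n (fun j => Real.log (p j)) α hb hα rfl
  have hrw : ∀ t : ℝ, (∑ j, α j * (p j) ^ t) = ∑ j, α j * Real.exp (Real.log (p j) * t) :=
    fun t => Finset.sum_congr rfl fun j _ => by rw [Real.rpow_def_of_pos (hppos j)]
  have hseteq : {t : ℝ | f t = 0} =
      {t : ℝ | ∑ j, α j * Real.exp (Real.log (p j) * t) = 0} := by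
    ext t
    simp only [Set.mem_setOf_eq, hf, hrw]
  rw [hseteq]
  exact ⟨hfin, hcard⟩
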